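/- Let p be a prime and let α : G̃ → G be a surjective homomorphism of finite groups whose kernel is contained in the center Z(G̃). If a p-subgroup P ≤ G is p-centric in G and F_p(G)-radical, then the preimage α^{-1}(P) ≤ G̃ is p-centric in G̃ and F_p(G̃)-radical. -/

import Mathlib

/-- A subgroup `P ≤ G` is `p`-centric in `G` if every element of `p`-power order in the
centralizer `C_G(P)` lies in `P`. -/
def IsPCentric (p : ℕ) {G : Type*} [Group G] (P : Subgroup G) : Prop :=
  ∀ g ∈ Subgroup.centralizer (P : Set G), (∃ n : ℕ, g ^ p ^ n = 1) → g ∈ P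

/-- The subgroup `P ⬝ C_G(P)` of the normalizer `N_G(P)`, i.e. the kernel of
`N_G(P) → Out_G(P)`. -/
def outKer {G : Type*} [Group G] (P : Subgroup G) : Subgroup (Subgroup.normalizer (P : Set G)) :=
  (P ⊔ Subgroup.centralizer (P : Set G)).subgroupOf (Subgroup.normalizer (P : Set G))

instance outKer_normal {G : Type*} [Group G] (P : Subgroup G) : (outKer P).Normal := by
  constructor
  intro n hn g
  rw [outKer, Subgroup.mem_subgroupOf] at hn ⊢
  have key : ∀ x : G, x ∈ (Subgroup.normalizer (P : Set G)) →
      ∀ y ∈ P ⊔ Subgroup.centralizer (P : Set G),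
        x * y * x⁻¹ ∈ P ⊔ Subgroup.centralizer (P : Set G) := by
    intro x hx y hy
    have hPle : P.map (MulAut.conj x).toMonoidHom
        ≤ P ⊔ Subgroup.centralizer (P : Set G) := by
      rintro _ ⟨y, hyP, rfl⟩
      exact Subgroup.mem_sup_left
        (by simpa using (Subgroup.mem_normalizer_iff.mp hx y).mp hyP)
    have hCle : (Subgroup.centralizer (P : Set G)).map (MulAut.conj x).toMonoidHom
        ≤ P ⊔ Subgroup.centralizer (P : Set G) := by
      rintro _ ⟨y, hyC, rfl⟩
      have hyC' : ∀ h ∈ P, h * y = y * h := fun h hh =>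
        Subgroup.mem_centralizer_iff.mp hyC h hh
      refine Subgroup.mem_sup_right (Subgroup.mem_centralizer_iff.mpr ?_)
      intro h hh
      have hh' : x⁻¹ * h * x ∈ P := by
        refine (Subgroup.mem_normalizer_iff.mp hx (x⁻¹ * h * x)).mpr ?_
        have : x * (x⁻¹ * h * x) * x⁻¹ = h := by group
        rw [this]
        exact hh
      have hcomm := hyC' _ hh'
      have : (MulAut.conj x).toMonoidHom y = x * y * x⁻¹ := by
        simp [MulAut.conj_apply]
      rw [this]
      calc h * (x * y * x⁻¹) = x * ((x⁻¹ * h * x) * y) * x⁻¹ := by group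
        _ = x * (y * (x⁻¹ * h * x)) * x⁻¹ := by rw [hcomm]
        _ = x * y * x⁻¹ * h := by group
    have hmap : (P ⊔ Subgroup.centralizer (P : Set G)).map (MulAut.conj x).toMonoidHom
        ≤ P ⊔ Subgroup.centralizer (P : Set G) := by
      rw [Subgroup.map_sup]
      exact sup_le hPle hCle
    have := hmap (Subgroup.mem_map_of_mem _ hy)
    simpa using this
  have := key (g : G) g.2 (n : G) hn
  simpa [mul_assoc] using this

/-- `Out_G(P) = N_G(P) / (P ⬝ C_G(P))`. -/
def OutG {G : Type*} [Group G] (P : Subgroup G) : Type _ :=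
  (Subgroup.normalizer (P : Set G)) ⧸ outKer P

instance {G : Type*} [Group G] (P : Subgroup G) : Group (OutG P) :=
  inferInstanceAs (Group ((Subgroup.normalizer (P : Set G)) ⧸ outKer P))

/-- A subgroup `P ≤ G` is `F_p(G)`-radical if `Out_G(P) = N_G(P)/(P ⬝ C_G(P))` has no
nontrivial normal `p`-subgroup. -/
def IsFpRadical (p : ℕ) {G : Type*} [Group G] (P : Subgroup G) : Prop :=
  ∀ K : Subgroup (OutG P), K.Normal → IsPGroup p K → K = ⊥

section AuxLemmas

variable {G : Type*} [Group G]

/-- If `A` normalizes `B`, every element of `A ⊔ B` is a product `a * b`. -/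
lemma mem_sup_decomp {A B : Subgroup G} (h : A ≤ Subgroup.normalizer (B : Set G)) {g : G}
    (hg : g ∈ A ⊔ B) : ∃ a ∈ A, ∃ b ∈ B, g = a * b := by
  let S : Subgroup G :=
    { carrier := {g | ∃ a ∈ A, ∃ b ∈ B, g = a * b}
      one_mem' := ⟨1, one_mem A, 1, one_mem B, by group⟩
      mul_mem' := by
        rintro x y ⟨a₁, ha₁, b₁, hb₁, rfl⟩ ⟨a₂, ha₂, b₂, hb₂, rfl⟩
        refine ⟨a₁ * a₂, mul_mem ha₁ ha₂, (a₂⁻¹ * b₁ * a₂) * b₂, mul_mem ?_ hb₂, by group⟩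
        have := (Subgroup.mem_normalizer_iff.mp (h (inv_mem ha₂)) b₁).mp hb₁
        simpa [mul_assoc] using this
      inv_mem' := by
        rintro x ⟨a, ha, b, hb, rfl⟩
        refine ⟨a⁻¹, inv_mem ha, a * b⁻¹ * a⁻¹, ?_, by group⟩
        exact (Subgroup.mem_normalizer_iff.mp (h ha) b⁻¹).mp (inv_mem hb) }
  have hle : A ⊔ B ≤ S :=
    sup_le (fun a ha => ⟨a, ha, 1, one_mem B, (mul_one a).symm⟩)
      (fun b hb => ⟨1, one_mem A, b, hb, (one_mul b).symm⟩)
  exact hle hg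

/-- `P` normalizes its centralizer. -/
lemma le_normalizer_centralizer (P : Subgroup G) :
    P ≤ Subgroup.normalizer ((Subgroup.centralizer (P : Set G) : Subgroup G) : Set G) := by
  intro x hx
  rw [Subgroup.mem_normalizer_iff]
  intro y
  constructor
  · intro hy
    have hxy : x * y = y * x := Subgroup.mem_centralizer_iff.mp hy x hx
    have : x * y * x⁻¹ = y := by rw [hxy]; group
    rwa [this]
  · intro hy
    have hxy : x * (x * y * x⁻¹) = (x * y * x⁻¹) * x :=
      Subgroup.mem_centralizer_iff.mp hy x hx
    have hyy : y = x * y * x⁻¹ := by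
      calc y = x⁻¹ * (x * y * x⁻¹ * x) := by group
        _ = x⁻¹ * (x * (x * y * x⁻¹)) := by rw [← hxy]
        _ = x * y * x⁻¹ := by group
    rwa [hyy]

end AuxLemmas

section MainAux

variable {G' G : Type*} [Group G'] [Group G]

lemma mem_normalizer_comap_iff (α : G' →* G) (hsurj : Function.Surjective α)
    (P : Subgroup G) (g : G') :
    g ∈ Subgroup.normalizer ((P.comap α : Subgroup G') : Set G') ↔ α g ∈ Subgroup.normalizer (P : Set G) := by
  constructor
  · intro hg
    rw [Subgroup.mem_normalizer_iff] at hg ⊢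
    intro y
    obtain ⟨x, rfl⟩ := hsurj y
    have h1 : α x ∈ P ↔ x ∈ P.comap α := (Subgroup.mem_comap).symm
    rw [h1, hg x, Subgroup.mem_comap, map_mul, map_mul, map_inv]
  · intro hg
    rw [Subgroup.mem_normalizer_iff] at hg ⊢
    intro x
    rw [Subgroup.mem_comap, Subgroup.mem_comap, map_mul, map_mul, map_inv]
    exact hg (α x)

lemma map_centralizer_le (α : G' →* G) (hsurj : Function.Surjective α) (P : Subgroup G)
    {c : G'} (hcm : c ∈ Subgroup.centralizer ((P.comap α : Subgroup G') : Set G')) :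
    α c ∈ Subgroup.centralizer (P : Set G) := by
  rw [Subgroup.mem_centralizer_iff]
  intro y hy
  obtain ⟨x, rfl⟩ := hsurj y
  have hx : x ∈ P.comap α := Subgroup.mem_comap.mpr hy
  have := Subgroup.mem_centralizer_iff.mp hcm x hx
  rw [← map_mul, this, map_mul]

/-- The key lemma: if `α g` centralizes `P` then `g ∈ P' ⊔ C_{G'}(P')`. -/
lemma key_lemma (p : ℕ) (hp : p.Prime) [Finite G'] [Finite G]
    (α : G' →* G) (hker : α.ker ≤ Subgroup.center G')
    (P : Subgroup G) (hP : IsPGroup p P) (hc : IsPCentric p P)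
    (g : G') (hg : α g ∈ Subgroup.centralizer (P : Set G)) :
    g ∈ P.comap α ⊔ Subgroup.centralizer ((P.comap α : Subgroup G') : Set G') := by
  set P' := P.comap α with hP'def
  set n := orderOf (α g) with hn
  set m := ordCompl[p] n with hm
  have hn0 : n ≠ 0 := (orderOf_pos (α g)).ne'
  -- `g ^ m ∈ P'`
  have hgm : g ^ m ∈ P' := by
    have hmn : m * p ^ n.factorization p = n := by
      rw [hm, mul_comm]
      exact Nat.ordProj_mul_ordCompl_eq_self n p
    have h1 : ((α g) ^ m) ^ (p ^ n.factorization p) = 1 := by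
      rw [← pow_mul, hmn, hn]
      exact pow_orderOf_eq_one (α g)
    have h2 : (α g) ^ m ∈ Subgroup.centralizer (P : Set G) := pow_mem hg m
    have h3 : (α g) ^ m ∈ P := hc _ h2 ⟨_, h1⟩
    rw [hP'def, Subgroup.mem_comap, map_pow]
    exact h3
  -- `g ^ E ∈ centralizer P'` where `E = p ^ Nat.card G'`
  set N := Nat.card G' with hN
  set E := p ^ N with hE
  have hgE : g ^ E ∈ Subgroup.centralizer (P' : Set G') := by
    rw [Subgroup.mem_centralizer_iff]
    intro x hx
    have hxP : α x ∈ P := Subgroup.mem_comap.mp hx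
    set c := g * x * g⁻¹ * x⁻¹ with hcdef
    have hcz : c ∈ Subgroup.center G' := by
      apply hker
      rw [MonoidHom.mem_ker]
      have hcomm : α x * α g = α g * α x := Subgroup.mem_centralizer_iff.mp hg (α x) hxP
      have hca : α c = α g * α x * (α g)⁻¹ * (α x)⁻¹ := by
        rw [hcdef]; simp [map_mul]
      rw [hca, ← hcomm]
      group
    have hcg : ∀ w : G', w * c = c * w := fun w => Subgroup.mem_center_iff.mp hcz w
    have hgc : Commute g c := hcg g
    have hstep : g * x * g⁻¹ = c * x := by rw [hcdef]; group
    have f1 : ∀ k : ℕ, g ^ k * x * (g ^ k)⁻¹ = c ^ k * x := by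
      intro k
      induction k with
      | zero => simp
      | succ k ih =>
        calc g ^ (k + 1) * x * (g ^ (k + 1))⁻¹
            = g * (g ^ k * x * (g ^ k)⁻¹) * g⁻¹ := by
              rw [pow_succ' g k]; group
          _ = g * (c ^ k * x) * g⁻¹ := by rw [ih]
          _ = (g * c ^ k) * (x * g⁻¹) := by group
          _ = (c ^ k * g) * (x * g⁻¹) := by rw [(hgc.pow_right k).eq]
          _ = c ^ k * (g * x * g⁻¹) := by group
          _ = c ^ k * (c * x) := by rw [hstep]
          _ = c ^ (k + 1) * x := by rw [pow_succ]; group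
    obtain ⟨j, hj⟩ := hP ⟨α x, hxP⟩
    have hxpj : (α x) ^ (p ^ j) = 1 := by
      have := congrArg (Subtype.val) hj
      simpa using this
    have hzc : x ^ (p ^ j) ∈ Subgroup.center G' := by
      apply hker
      rw [MonoidHom.mem_ker, map_pow, hxpj]
    have f2 : g * x ^ (p ^ j) * g⁻¹ = c ^ (p ^ j) * x ^ (p ^ j) := by
      have h1 : g * x ^ (p ^ j) * g⁻¹ = (g * x * g⁻¹) ^ (p ^ j) := (conj_pow).symm
      have hcx : Commute c x := (hcg x).symm
      rw [h1, hstep, hcx.mul_pow]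
    have hcpj : c ^ (p ^ j) = 1 := by
      have hcent : g * x ^ (p ^ j) * g⁻¹ = x ^ (p ^ j) := by
        have hcc := Subgroup.mem_center_iff.mp hzc g
        rw [hcc]; group
      have h5 : c ^ (p ^ j) * x ^ (p ^ j) = 1 * x ^ (p ^ j) := by
        rw [← f2, hcent, one_mul]
      exact mul_right_cancel h5
    have hcE : c ^ E = 1 := by
      have hdvd : orderOf c ∣ p ^ j := orderOf_dvd_of_pow_eq_one hcpj
      obtain ⟨a, _, ha⟩ := (Nat.dvd_prime_pow hp).mp hdvd
      have hdvdN : orderOf c ∣ N := orderOf_dvd_natCard c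
      have hNpos : 0 < N := Nat.card_pos
      have haN : a ≤ N := by
        have h1 : p ^ a ≤ N := Nat.le_of_dvd hNpos (ha ▸ hdvdN)
        have h2 : a < p ^ a := Nat.lt_pow_self (n := a) hp.one_lt
        omega
      have hdE : orderOf c ∣ E := by
        rw [ha, hE]
        exact pow_dvd_pow p haN
      exact orderOf_dvd_iff_pow_eq_one.mp hdE
    have hf1E := f1 E
    rw [hcE, one_mul] at hf1E
    calc x * g ^ E = (g ^ E * x * (g ^ E)⁻¹) * g ^ E := by rw [hf1E]
      _ = g ^ E * x := by group
  -- Bezout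
  have hco : Nat.Coprime E m := Nat.Coprime.pow_left N (Nat.coprime_ordCompl hp hn0)
  have hgcd : Int.gcd (E : ℤ) (m : ℤ) = 1 := by
    rw [Int.gcd_natCast_natCast]
    exact hco
  have hbez := Int.gcd_eq_gcd_ab (E : ℤ) (m : ℤ)
  set A := Int.gcdA (E : ℤ) (m : ℤ) with hA
  set B := Int.gcdB (E : ℤ) (m : ℤ) with hB
  have h1 : (1 : ℤ) = (E : ℤ) * A + (m : ℤ) * B := by
    rw [← hbez, hgcd]
    norm_num
  have h3 : (g ^ E) ^ A * (g ^ m) ^ B = g ^ ((E : ℤ) * A + (m : ℤ) * B) := by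
    rw [zpow_add, zpow_mul, zpow_mul, zpow_natCast, zpow_natCast]
  have hgdecomp : (g ^ E) ^ A * (g ^ m) ^ B = g := by rw [h3, ← h1, zpow_one]
  rw [← hgdecomp]
  exact Subgroup.mul_mem _ (Subgroup.mem_sup_right (Subgroup.zpow_mem _ hgE A))
    (Subgroup.mem_sup_left (Subgroup.zpow_mem _ hgm B))

end MainAux

theorem stmt_19 (p : ℕ) (hp : p.Prime) {G' G : Type*} [Group G'] [Group G]
    [Finite G'] [Finite G] (α : G' →* G) (hsurj : Function.Surjective α)
    (hker : α.ker ≤ Subgroup.center G')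
    (P : Subgroup G) (hP : IsPGroup p P) (hc : IsPCentric p P) (hr : IsFpRadical p P) :
    IsPCentric p (P.comap α) ∧ IsFpRadical p (P.comap α) := by
  constructor
  · -- p-centric
    intro g hg hpow
    obtain ⟨k, hk⟩ := hpow
    rw [Subgroup.mem_comap]
    apply hc
    · rw [Subgroup.mem_centralizer_iff]
      intro y hy
      obtain ⟨x, rfl⟩ := hsurj y
      have hx : x ∈ P.comap α := Subgroup.mem_comap.mpr hy
      have := Subgroup.mem_centralizer_iff.mp hg x hx
      rw [← map_mul, this, map_mul]
    · exact ⟨k, by rw [← map_pow, hk, map_one]⟩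
  · -- Fp-radical
    set P' := P.comap α with hP'def
    have hmem : ∀ g : Subgroup.normalizer (P' : Set G'), α (g : G') ∈ Subgroup.normalizer (P : Set G) := fun g =>
      (mem_normalizer_comap_iff α hsurj P g).mp g.2
    set β : Subgroup.normalizer (P' : Set G') →* Subgroup.normalizer (P : Set G) :=
      (α.comp (Subgroup.normalizer (P' : Set G')).subtype).codRestrict (Subgroup.normalizer (P : Set G)) hmem with hβ
    have hβval : ∀ g : Subgroup.normalizer (P' : Set G'), (β g : G) = α (g : G') := fun g => rfl
    set f : Subgroup.normalizer (P' : Set G') →* OutG P := (QuotientGroup.mk' (outKer P)).comp β with hf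
    have hsup_le : (P' ⊔ Subgroup.centralizer (P' : Set G')) ≤
        (P ⊔ Subgroup.centralizer (P : Set G)).comap α := by
      apply sup_le
      · exact fun x hx =>
          Subgroup.mem_comap.mpr (Subgroup.mem_sup_left (Subgroup.mem_comap.mp hx))
      · exact fun x hx =>
          Subgroup.mem_comap.mpr (Subgroup.mem_sup_right (map_centralizer_le α hsurj P hx))
    have hkf : outKer P' ≤ f.ker := by
      intro g hgk
      rw [outKer, Subgroup.mem_subgroupOf] at hgk
      have h1 : α (g : G') ∈ P ⊔ Subgroup.centralizer (P : Set G) :=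
        Subgroup.mem_comap.mp (hsup_le hgk)
      rw [MonoidHom.mem_ker]
      show QuotientGroup.mk' (outKer P) (β g) = 1
      rw [QuotientGroup.mk'_apply, QuotientGroup.eq_one_iff]
      rw [outKer, Subgroup.mem_subgroupOf]
      exact h1
    set Φ : OutG P' →* OutG P := QuotientGroup.lift (outKer P') f hkf with hΦ
    have hΦmk : ∀ g : Subgroup.normalizer (P' : Set G'), Φ (QuotientGroup.mk' (outKer P') g) = f g :=
      fun g => rfl
    have hsurjΦ : Function.Surjective Φ := by
      intro q
      obtain ⟨y, rfl⟩ := QuotientGroup.mk'_surjective (outKer P) q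
      obtain ⟨g, hg⟩ := hsurj (y : G)
      have hgN : g ∈ Subgroup.normalizer (P' : Set G') :=
        (mem_normalizer_comap_iff α hsurj P g).mpr (hg ▸ y.2)
      refine ⟨QuotientGroup.mk' (outKer P') ⟨g, hgN⟩, ?_⟩
      rw [hΦmk]
      show QuotientGroup.mk' (outKer P) (β ⟨g, hgN⟩) = QuotientGroup.mk' (outKer P) y
      congr 1
      exact Subtype.ext (by rw [hβval]; exact hg)
    have hker1 : ∀ x : OutG P', Φ x = 1 → x = 1 := by
      intro x hx
      obtain ⟨g, rfl⟩ := QuotientGroup.mk'_surjective (outKer P') x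
      rw [hΦmk] at hx
      replace hx : QuotientGroup.mk' (outKer P) (β g) = 1 := hx
      rw [QuotientGroup.mk'_apply, QuotientGroup.eq_one_iff, outKer,
        Subgroup.mem_subgroupOf] at hx
      have h2 : α (g : G') ∈ P ⊔ Subgroup.centralizer (P : Set G) := hx
      obtain ⟨x0, hx0, c0, hc0, hprod⟩ :=
        mem_sup_decomp (le_normalizer_centralizer P) h2
      obtain ⟨x', hx'⟩ := hsurj x0
      have hx'P : x' ∈ P' := Subgroup.mem_comap.mpr (hx' ▸ hx0)
      have hc' : α (x'⁻¹ * (g : G')) ∈ Subgroup.centralizer (P : Set G) := by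
        rw [map_mul, map_inv, hx', hprod]
        have : x0⁻¹ * (x0 * c0) = c0 := by group
        rw [this]
        exact hc0
      have hkey := key_lemma p hp α hker P hP hc _ hc'
      have hgsup : (g : G') ∈ P' ⊔ Subgroup.centralizer (P' : Set G') := by
        have hgeq : (g : G') = x' * (x'⁻¹ * (g : G')) := by group
        rw [hgeq]
        exact Subgroup.mul_mem _ (Subgroup.mem_sup_left hx'P) hkey
      show (QuotientGroup.mk' (outKer P') g : Subgroup.normalizer (P' : Set G') ⧸ outKer P') = 1
      rw [QuotientGroup.mk'_apply, QuotientGroup.eq_one_iff, outKer,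
        Subgroup.mem_subgroupOf]
      exact hgsup
    intro KK hKn hKp
    have hL : KK.map Φ = ⊥ := hr _ (hKn.map Φ hsurjΦ) (hKp.map Φ)
    rw [eq_bot_iff]
    intro k hk
    rw [Subgroup.mem_bot]
    apply hker1
    have hmem2 : Φ k ∈ KK.map Φ := Subgroup.mem_map_of_mem Φ hk
    rw [hL, Subgroup.mem_bot] at hmem2
    exact hmem2
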